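/- Let Q ⊆ S ⊆ L be fields with L quasireal and S a finite Galois extension of Q. If L is a repeated radical extension of Q, then [S:Q] is a power of 2. Conversely, if [S:Q] is a power of 2, then S itself is a repeated radical extension of Q. -/

import Mathlib

open IntermediateField Polynomial Module


/-- A field is quasireal if it has characteristic zero and its only roots of
unity are `±1`. -/
def IsQuasireal (L : Type*) [Field L] : Prop :=
  CharZero L ∧ ∀ ζ : L, (∃ n : ℕ, 0 < n ∧ ζ ^ n = 1) → ζ = 1 ∨ ζ = -1

/-- `B = A[α]` for some `α` with a positive power of `α` in `A`
(a single radical step, inside a fixed ambient extension `E` of `Q`). -/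
def RadicalStep (Q E : Type*) [Field Q] [Field E] [Algebra Q E]
    (A B : IntermediateField Q E) : Prop :=
  ∃ α : E, (∃ n : ℕ, 0 < n ∧ α ^ n ∈ A) ∧ B = A ⊔ IntermediateField.adjoin Q {α}

/-- `B` is obtained from `A` by a finite tower of radical extensions. -/
def IsRepeatedRadical (Q E : Type*) [Field Q] [Field E] [Algebra Q E]
    (A B : IntermediateField Q E) : Prop :=
  Relation.ReflTransGen (RadicalStep Q E) A B

universe u v

section Aux

variable {Q : Type u} {L : Type v} [Field Q] [Field L] [Algebra Q L]

/-- A radical step with prime exponent. -/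
def PStep (Q : Type u) (L : Type v) [Field Q] [Field L] [Algebra Q L]
    (A B : IntermediateField Q L) : Prop :=
  ∃ α : L, (∃ p : ℕ, p.Prime ∧ α ^ p ∈ A) ∧ B = A ⊔ IntermediateField.adjoin Q {α}

/-- Chains of prime radical steps of a given length. -/
def PChain (Q : Type u) (L : Type v) [Field Q] [Field L] [Algebra Q L] :
    ℕ → IntermediateField Q L → IntermediateField Q L → Prop
  | 0, A, B => A = B
  | n+1, A, B => ∃ C, PStep Q L A C ∧ PChain Q L n C B

lemma PStep.le_of {A B : IntermediateField Q L} (h : PStep Q L A B) : A ≤ B := by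
  obtain ⟨α, -, rfl⟩ := h; exact le_sup_left

lemma PChain.le_of : ∀ {n : ℕ} {A B : IntermediateField Q L}, PChain Q L n A B → A ≤ B
  | 0, A, B, h => le_of_eq h
  | n+1, A, B, ⟨C, h1, h2⟩ => h1.le_of.trans h2.le_of

lemma PChain.snoc : ∀ {n : ℕ} {A B C : IntermediateField Q L},
    PChain Q L n A B → PStep Q L B C → PChain Q L (n+1) A C
  | 0, A, B, C, h1, h2 => ⟨C, h1 ▸ h2, rfl⟩
  | n+1, A, B, C, ⟨D, hD, h1⟩, h2 => ⟨D, hD, h1.snoc h2⟩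

lemma pchain_of_pow_mem : ∀ n : ℕ, 0 < n → ∀ (A : IntermediateField Q L) (α : L), α ^ n ∈ A →
    Relation.ReflTransGen (PStep Q L) A (A ⊔ IntermediateField.adjoin Q {α}) := by
  intro n
  induction n using Nat.strong_induction_on with
  | _ n IH =>
    intro hn A α hα
    rcases eq_or_lt_of_le (show 1 ≤ n from hn) with h1 | h2
    · -- n = 1
      rw [← h1] at hα
      simp only [pow_one] at hα
      have : A ⊔ IntermediateField.adjoin Q {α} = A :=
        sup_eq_left.mpr (adjoin_le_iff.mpr (Set.singleton_subset_iff.mpr hα))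
      rw [this]
    · -- n ≥ 2
      set p := n.minFac with hpdef
      have hp : p.Prime := Nat.minFac_prime (by omega)
      have hpd : p ∣ n := Nat.minFac_dvd n
      set m := n / p with hmdef
      have hmn : m * p = n := Nat.div_mul_cancel hpd
      have hm1 : m < n := Nat.div_lt_self (by omega) hp.one_lt
      have hm0 : 0 < m := Nat.pos_of_ne_zero (fun h => by rw [h, zero_mul] at hmn; omega)
      have hpow : (α ^ p) ^ m ∈ A := by
        rw [← pow_mul, mul_comm, hmn]; exact hα
      have step1 := IH m hm1 hm0 A (α ^ p) hpow
      have hle : IntermediateField.adjoin Q {α ^ p} ≤ IntermediateField.adjoin Q {α} :=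
        adjoin_le_iff.mpr (Set.singleton_subset_iff.mpr
          (pow_mem (IntermediateField.subset_adjoin Q {α} rfl) p))
      have heq : A ⊔ IntermediateField.adjoin Q {α} =
          (A ⊔ IntermediateField.adjoin Q {α ^ p}) ⊔ IntermediateField.adjoin Q {α} := by
        rw [sup_assoc, sup_eq_right.mpr hle]
      have hmem : α ^ p ∈ (A ⊔ IntermediateField.adjoin Q {α ^ p} : IntermediateField Q L) :=
        (le_sup_right : IntermediateField.adjoin Q {α ^ p} ≤ _)
          (IntermediateField.subset_adjoin Q {α ^ p} rfl)
      exact step1.tail ⟨α, ⟨p, hp, hmem⟩, heq⟩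

lemma exists_pchain {A B : IntermediateField Q L}
    (h : Relation.ReflTransGen (RadicalStep Q L) A B) : ∃ n, PChain Q L n A B := by
  have h' : Relation.ReflTransGen (PStep Q L) A B := by
    induction h with
    | refl => exact .refl
    | tail _ hstep ih =>
      obtain ⟨α, ⟨n, hn, hmem⟩, rfl⟩ := hstep
      exact ih.trans (pchain_of_pow_mem n hn _ α hmem)
  clear h
  induction h' with
  | refl => exact ⟨0, rfl⟩
  | tail _ hstep ih => obtain ⟨n, hn⟩ := ih; exact ⟨n+1, hn.snoc hstep⟩

end Aux

section Transfer

variable {Q : Type u} {L : Type v} [Field Q] [Field L] [Algebra Q L]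

lemma extendScalars_congr {F₁ A B : IntermediateField Q L} {h1 : F₁ ≤ A} {h2 : F₁ ≤ B}
    (e : A = B) : IntermediateField.extendScalars h1 = IntermediateField.extendScalars h2 := by
  subst e; rfl

/-- Key equality: adjoining over the bigger base. -/
lemma extendScalars_sup_adjoin {F₁ A : IntermediateField Q L} (h : F₁ ≤ A) (β : L) :
    IntermediateField.extendScalars h ⊔ IntermediateField.adjoin ↥F₁ {β} =
      IntermediateField.extendScalars
        (h.trans (le_sup_left : A ≤ A ⊔ IntermediateField.adjoin Q {β})) := by
  have h2 : IntermediateField.adjoin ↥F₁ {β} = IntermediateField.extendScalars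
      (le_sup_left : F₁ ≤ F₁ ⊔ IntermediateField.adjoin Q {β}) := by
    apply IntermediateField.restrictScalars_injective Q
    rw [IntermediateField.extendScalars_restrictScalars,
      IntermediateField.restrictScalars_adjoin_eq_sup]
  rw [h2, IntermediateField.extendScalars_sup]
  apply extendScalars_congr
  rw [← sup_assoc, sup_eq_left.mpr h]

lemma pchain_extendScalars {F₁ : IntermediateField Q L} :
    ∀ (n : ℕ) (A B : IntermediateField Q L) (hA : F₁ ≤ A) (hB : F₁ ≤ B),
    PChain Q L n A B →
    PChain ↥F₁ L n (IntermediateField.extendScalars hA) (IntermediateField.extendScalars hB) := by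
  intro n
  induction n with
  | zero => intro A B hA hB h; exact extendScalars_congr h
  | succ n IH =>
    rintro A B hA hB ⟨C, ⟨α, ⟨p, hp, hmem⟩, rfl⟩, hchain⟩
    have hC : F₁ ≤ A ⊔ IntermediateField.adjoin Q {α} := hA.trans le_sup_left
    refine ⟨IntermediateField.extendScalars hC, ⟨α, ⟨p, hp, hmem⟩, ?_⟩, IH _ _ hC hB hchain⟩
    exact (extendScalars_sup_adjoin hA α).symm

lemma repeatedRadical_restrictScalars {F₁ : IntermediateField Q L}
    {A B : IntermediateField ↥F₁ L}
    (h : Relation.ReflTransGen (RadicalStep ↥F₁ L) A B) :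
    Relation.ReflTransGen (RadicalStep Q L)
      (IntermediateField.restrictScalars Q A) (IntermediateField.restrictScalars Q B) := by
  induction h with
  | refl => exact .refl
  | tail _ hstep ih =>
    rename_i B C _
    obtain ⟨α, ⟨n, hn, hmem⟩, rfl⟩ := hstep
    refine ih.tail ⟨α, ⟨n, hn, hmem⟩, ?_⟩
    -- restrictScalars (B ⊔ adjoin F₁ {α}) = restrictScalars B ⊔ adjoin Q {α}
    have hF₁B : F₁ ≤ IntermediateField.restrictScalars Q B := by
      intro x hx
      have : algebraMap ↥F₁ L ⟨x, hx⟩ ∈ B := B.algebraMap_mem _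
      exact this
    have hBeq : B = IntermediateField.extendScalars hF₁B := SetLike.coe_injective rfl
    rw [hBeq, extendScalars_sup_adjoin hF₁B α]
    rfl

lemma repeatedRadical_map {M : Type*} [Field M] [Algebra Q M] (f : M →ₐ[Q] L)
    {A B : IntermediateField Q M}
    (h : Relation.ReflTransGen (RadicalStep Q M) A B) :
    Relation.ReflTransGen (RadicalStep Q L)
      (IntermediateField.map f A) (IntermediateField.map f B) := by
  induction h with
  | refl => exact .refl
  | tail _ hstep ih =>
    obtain ⟨α, ⟨n, hn, hmem⟩, rfl⟩ := hstep
    refine ih.tail ⟨f α, ⟨n, hn, ?_⟩, ?_⟩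
    · exact ⟨α ^ n, hmem, by simp⟩
    · rw [IntermediateField.map_sup, IntermediateField.adjoin_map, Set.image_singleton]

end Transfer

section Quad

variable {Q : Type u} {M : Type v} [Field Q] [Field M] [Algebra Q M]

lemma quad_radical_step [CharZero M] (F : IntermediateField Q M)
    (hF : Module.finrank Q ↥F = 2) : RadicalStep Q M ⊥ F := by
  haveI : FiniteDimensional Q ↥F := FiniteDimensional.of_finrank_pos (by omega)
  have hFne : F ≠ ⊥ := fun h => by rw [h, IntermediateField.finrank_bot] at hF; omega
  obtain ⟨β, hβF, hβbot⟩ : ∃ β : M, β ∈ F ∧ β ∉ (⊥ : IntermediateField Q M) := by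
    by_contra h
    push_neg at h
    exact hFne (le_antisymm (fun x hx => h x hx) bot_le)
  have hint : IsIntegral Q β := by
    have h1 : IsIntegral Q (⟨β, hβF⟩ : ↥F) := IsIntegral.of_finite Q _
    exact h1.map F.val
  have hle : Q⟮β⟯ ≤ F := IntermediateField.adjoin_simple_le_iff.mpr hβF
  have hd2 : Module.finrank Q ↥Q⟮β⟯ = 2 := by
    have hdvd : Module.finrank Q ↥Q⟮β⟯ ∣ 2 :=
      ⟨IntermediateField.relfinrank Q⟮β⟯ F, by
        rw [← hF, IntermediateField.finrank_bot_mul_relfinrank hle]⟩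
    rcases (Nat.dvd_prime Nat.prime_two).mp hdvd with h | h
    · exfalso
      rw [IntermediateField.finrank_eq_one_iff, IntermediateField.adjoin_simple_eq_bot_iff] at h
      exact hβbot h
    · exact h
  have hQβF : Q⟮β⟯ = F := IntermediateField.eq_of_le_of_finrank_eq hle (by rw [hd2, hF])
  have hdeg : (minpoly Q β).natDegree = 2 := by
    rw [← IntermediateField.adjoin.finrank hint, hd2]
  set m := minpoly Q β with hm
  have h0 : ∑ i ∈ Finset.range 3, m.coeff i • β ^ i = 0 := by
    have := Polynomial.aeval_eq_sum_range (R := Q) (p := m) β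
    rw [hdeg] at this
    rw [← this, minpoly.aeval]
  have hc2 : m.coeff 2 = 1 := by
    have := (minpoly.monic hint).coeff_natDegree
    rwa [hdeg] at this
  rw [Finset.sum_range_succ, Finset.sum_range_succ, Finset.sum_range_one, hc2, one_smul] at h0
  set b := m.coeff 1
  set c := m.coeff 0
  have heq : algebraMap Q M c + algebraMap Q M b * β + β ^ 2 = 0 := by
    simpa [Algebra.smul_def] using h0
  set γ := 2 * β + algebraMap Q M b with hγ
  have hγ2 : γ ^ 2 = algebraMap Q M (b ^ 2 - 4 * c) := by
    have hmap : algebraMap Q M (b ^ 2 - 4 * c) =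
        (algebraMap Q M b) ^ 2 - 4 * algebraMap Q M c := by
      rw [map_sub, map_pow, map_mul, map_ofNat]
    rw [hmap, hγ]
    linear_combination (4 : M) * heq
  have h2mem : (2 : M) ∈ Q⟮γ⟯ := by
    have := Q⟮γ⟯.algebraMap_mem 2
    rwa [map_ofNat] at this
  have hβγ : β ∈ Q⟮γ⟯ := by
    have hβeq : β = (γ - algebraMap Q M b) / 2 := by
      rw [hγ]; field_simp; ring
    rw [hβeq]
    exact div_mem (sub_mem (IntermediateField.mem_adjoin_simple_self Q γ)
      (Q⟮γ⟯.algebraMap_mem b)) h2mem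
  have hγβ : γ ∈ Q⟮β⟯ := by
    have h2mem' : (2 : M) ∈ Q⟮β⟯ := by
      have := Q⟮β⟯.algebraMap_mem 2
      rwa [map_ofNat] at this
    exact add_mem (mul_mem h2mem' (IntermediateField.mem_adjoin_simple_self Q β))
      (Q⟮β⟯.algebraMap_mem b)
  refine ⟨γ, ⟨2, two_pos, ?_⟩, ?_⟩
  · rw [IntermediateField.mem_bot]
    exact ⟨b ^ 2 - 4 * c, hγ2.symm⟩
  · rw [bot_sup_eq, ← hQβF]
    exact le_antisymm (IntermediateField.adjoin_simple_le_iff.mpr hβγ)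
      (IntermediateField.adjoin_simple_le_iff.mpr hγβ)

end Quad

section Dir2

def Stmt2 (k : ℕ) : Prop :=
  ∀ (Q : Type u) (M : Type v) [Field Q] [Field M] [Algebra Q M], CharZero M →
    ∀ (_ : IsGalois Q M) (_ : FiniteDimensional Q M), Module.finrank Q M = 2 ^ k →
    Relation.ReflTransGen (RadicalStep Q M) ⊥ ⊤

lemma dir2_step : ∀ k : ℕ, (∀ j, j < k → Stmt2.{v, v} j) → Stmt2.{u, v} k := by
  intro k IH Q M _ _ _ hchar hgal hfin hrank
  match k with
  | 0 =>
    have hbt : (⊤ : IntermediateField Q M) = ⊥ := by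
      rw [← IntermediateField.finrank_eq_one_iff, IntermediateField.finrank_top']
      simpa using hrank
    rw [← hbt]
  | (j+1) =>
    classical
    set G := M ≃ₐ[Q] M
    have hcard : Nat.card G = 2 ^ (j + 1) := by
      rw [IsGalois.card_aut_eq_finrank, hrank]
    obtain ⟨H, hH⟩ := Sylow.exists_subgroup_card_pow_prime 2 (n := j)
      (by rw [hcard]; exact pow_dvd_pow 2 (by omega))
    set F := IntermediateField.fixedField H with hFdef
    have h1 : Module.finrank ↥F M = 2 ^ j := by
      rw [hFdef, IntermediateField.finrank_fixedField_eq_card]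
      exact hH
    have h2 : Module.finrank Q ↥F * 2 ^ j = 2 ^ (j + 1) := by
      rw [← h1, Module.finrank_mul_finrank, hrank]
    have hQF : Module.finrank Q ↥F = 2 := by
      have hp : 0 < 2 ^ j := pow_pos (by omega) j
      have : Module.finrank Q ↥F * 2 ^ j = 2 * 2 ^ j := by rw [h2, pow_succ, mul_comm]
      exact Nat.eq_of_mul_eq_mul_right hp this
    have step1 : RadicalStep Q M ⊥ F := quad_radical_step F hQF
    haveI hgalF : IsGalois ↥F M := inferInstance
    haveI hfinF : FiniteDimensional ↥F M := FiniteDimensional.right Q ↥F M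
    haveI hcharF : CharZero ↥F := by
      refine ⟨fun a b hab => ?_⟩
      have h : (a : M) = (b : M) := by
        have := congrArg (algebraMap ↥F M) hab
        rwa [map_natCast, map_natCast] at this
      exact Nat.cast_injective h
    have chain2 : Relation.ReflTransGen (RadicalStep ↥F M) ⊥ ⊤ :=
      IH j (by omega) ↥F M hchar hgalF hfinF h1
    have chain2' := repeatedRadical_restrictScalars chain2
    rw [IntermediateField.restrictScalars_bot_eq_self, IntermediateField.restrictScalars_top]
      at chain2'
    exact Relation.ReflTransGen.head step1 chain2'

lemma dir2_vv : ∀ k : ℕ, Stmt2.{v, v} k := by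
  intro k
  induction k using Nat.strong_induction_on with
  | _ k IH => exact dir2_step.{v, v} k IH

lemma dir2 : ∀ k : ℕ, Stmt2.{u, v} k := fun k => dir2_step.{u, v} k (fun j _ => dir2_vv.{v} j)

end Dir2

section Dir1

variable {Q : Type u} {L : Type v} [Field Q] [Field L] [Algebra Q L]

lemma hru_aux (hqr : IsQuasireal L) {p : ℕ} (hp : p.Prime) :
    ∀ x y : L, x ^ p = y ^ p → y ≠ 0 → x = y ∨ x = -y := by
  intro x y hxy hy
  have h1 : (x / y) ^ p = 1 := by rw [div_pow, hxy, div_self (pow_ne_zero p hy)]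
  rcases hqr.2 (x / y) ⟨p, hp.pos, h1⟩ with h | h
  · left; exact (div_eq_one_iff_eq hy).mp h
  · right; rw [div_eq_iff hy] at h; rw [h]; ring

lemma irr_aux (hqr : IsQuasireal L) {α : L} {a0 : Q} {p : ℕ} (hp : p.Prime)
    (ha0 : algebraMap Q L a0 = α ^ p) (hαbot : α ∉ (⊥ : IntermediateField Q L)) :
    Irreducible (Polynomial.X ^ p - Polynomial.C a0) := by
  have hαne : α ≠ 0 := fun h => hαbot (h ▸ zero_mem ⊥)
  apply X_pow_sub_C_irreducible_of_prime hp
  intro b hb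
  have hbL : (algebraMap Q L b) ^ p = α ^ p := by rw [← map_pow, hb, ha0]
  have hbne : algebraMap Q L b ≠ 0 := by
    intro h0
    rw [h0, zero_pow hp.ne_zero] at hbL
    exact hαne (pow_eq_zero_iff hp.ne_zero |>.mp hbL.symm)
  rcases hru_aux hqr hp α (algebraMap Q L b) hbL.symm hbne with h | h
  · exact hαbot (by rw [IntermediateField.mem_bot]; exact ⟨b, h.symm⟩)
  · exact hαbot (by rw [IntermediateField.mem_bot]; exact ⟨-b, by rw [map_neg, ← h]⟩)

/-- If a quasireal Galois extension contains `α` with `α^p` in the base field,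
`p` an odd prime, then `α` is in the base field. -/
lemma mem_bot_of_pow_mem_galois (hqr : IsQuasireal L) {S : IntermediateField Q L}
    (hgal : IsGalois Q ↥S) (hfin : FiniteDimensional Q ↥S) {α : L} (hαS : α ∈ S) {p : ℕ}
    (hp : p.Prime) (hp2 : p ≠ 2) {a0 : Q} (ha0 : algebraMap Q L a0 = α ^ p) :
    α ∈ (⊥ : IntermediateField Q L) := by
  classical
  by_contra hαbot
  have hαne : α ≠ 0 := fun h => hαbot (h ▸ zero_mem ⊥)
  have hirr := irr_aux hqr hp ha0 hαbot
  have hint : IsIntegral Q α :=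
    ⟨Polynomial.X ^ p - Polynomial.C a0, Polynomial.monic_X_pow_sub_C a0 hp.ne_zero, by
      rw [← Polynomial.aeval_def]; simp [map_sub, map_pow, ha0]⟩
  have hmin : minpoly Q α = Polynomial.X ^ p - Polynomial.C a0 :=
    (minpoly.eq_of_irreducible_of_monic hirr (by simp [map_sub, map_pow, ha0])
      (Polynomial.monic_X_pow_sub_C a0 hp.ne_zero)).symm
  set α' : ↥S := ⟨α, hαS⟩ with hα'
  have hminα' : minpoly Q α' = minpoly Q α := by
    have h := minpoly.algebraMap_eq (A := Q) (B := ↥S) (B' := L)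
      (algebraMap ↥S L).injective α'
    rw [show algebraMap ↥S L α' = α from rfl] at h
    exact h.symm
  have hintα' : IsIntegral Q α' := IsIntegral.of_finite Q α'
  have hsplits : Polynomial.Splits ((minpoly Q α').map (algebraMap Q ↥S)) :=
    hgal.to_normal.splits α'
  set g := (minpoly Q α').map (algebraMap Q ↥S) with hg
  have hgcard : g.roots.card = p := by
    have h : g.natDegree = g.roots.card := hsplits.natDegree_eq_card_roots
    have hd : g.natDegree = p := by
      rw [hg, Polynomial.natDegree_map, hminα', hmin, Polynomial.natDegree_X_pow_sub_C]
    omega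
  have hnodup : g.roots.Nodup :=
    Polynomial.nodup_roots (Polynomial.Separable.map (Algebra.IsSeparable.isSeparable Q α'))
  have hsub : ∀ ρ ∈ g.roots, ρ = α' ∨ ρ = -α' := by
    intro ρ hρ
    have hg0 : g ≠ 0 := Polynomial.map_ne_zero (minpoly.ne_zero hintα')
    have hroot : Polynomial.IsRoot g ρ := (Polynomial.mem_roots hg0).mp hρ
    have hgX : g = Polynomial.X ^ p - Polynomial.C (algebraMap Q ↥S a0) := by
      rw [hg, hminα', hmin]
      simp [Polynomial.map_sub, Polynomial.map_pow]
    have hρp : ρ ^ p = algebraMap Q ↥S a0 := by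
      rw [hgX] at hroot
      simpa [sub_eq_zero, Polynomial.IsRoot] using hroot
    have hρL : (ρ : L) ^ p = α ^ p := by
      have h := congrArg (algebraMap ↥S L) hρp
      rw [map_pow, ← IsScalarTower.algebraMap_apply, ha0] at h
      exact h
    rcases hru_aux hqr hp (ρ : L) α hρL hαne with h | h
    · left; exact Subtype.coe_injective h
    · right
      exact Subtype.ext h
  have hcard2 : g.roots.toFinset.card ≤ 2 := by
    have hsubset : g.roots.toFinset ⊆ {α', -α'} := by
      intro ρ hρ
      rcases hsub ρ (Multiset.mem_toFinset.mp hρ) with h | h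
      · simp [h]
      · simp [h]
    exact (Finset.card_le_card hsubset).trans
      ((Finset.card_insert_le _ _).trans (by simp))
  have hple : p ≤ 2 := by
    rw [← hgcard, ← Multiset.toFinset_card_of_nodup hnodup]
    exact hcard2
  have := hp.two_le
  omega

def Stmt1 (n : ℕ) : Prop :=
  ∀ (Q : Type u) (L : Type v) [Field Q] [Field L] [Algebra Q L], IsQuasireal L →
    ∀ (B S : IntermediateField Q L), PChain Q L n ⊥ B → S ≤ B →
    ∀ (_ : IsGalois Q ↥S) (_ : FiniteDimensional Q ↥S),
    ∃ k : ℕ, Module.finrank Q ↥S = 2 ^ k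

lemma dir1_step : ∀ n : ℕ, (∀ m, m < n → Stmt1.{v, v} m) → Stmt1.{u, v} n := by
  intro n IH Q L _ _ _ hqr B S hchain hSB hgal hfin
  match n, hchain with
  | 0, hchain =>
    refine ⟨0, ?_⟩
    have hB : B = ⊥ := hchain.symm
    have hS : S = ⊥ := le_bot_iff.mp (hB ▸ hSB)
    rw [pow_zero, hS]
    exact IntermediateField.finrank_bot
  | (m+1), ⟨C, ⟨α, ⟨p, hp, hαp⟩, hCdef⟩, hchain⟩ =>
    have hC' : C = IntermediateField.adjoin Q {α} := by rw [hCdef, bot_sup_eq]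
    obtain ⟨a0, ha0⟩ := IntermediateField.mem_bot.mp hαp
    have hCB : C ≤ B := hchain.le_of
    have hint : IsIntegral Q α :=
      ⟨Polynomial.X ^ p - Polynomial.C a0, Polynomial.monic_X_pow_sub_C a0 hp.ne_zero, by
        rw [← Polynomial.aeval_def]; simp [map_sub, map_pow, ha0]⟩
    haveI hCfin : FiniteDimensional Q ↥C :=
      hC' ▸ IntermediateField.adjoin.finiteDimensional hint
    set T := S ⊔ C with hTdef
    have hST : S ≤ T := le_sup_left
    have hCT : C ≤ T := le_sup_right
    have hTB : T ≤ B := sup_le hSB hCB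
    haveI hTfin : FiniteDimensional Q ↥T := IntermediateField.finiteDimensional_sup S C
    obtain ⟨f, hfsep, hfsplit⟩ := IsGalois.is_separable_splitting_field Q ↥S
    have hSad : S = IntermediateField.adjoin Q (f.rootSet L) :=
      (IntermediateField.isSplittingField_iff.mp hfsplit).2
    have hfL : Polynomial.Splits (f.map (algebraMap Q L)) := by
      rw [IsScalarTower.algebraMap_eq Q ↥S L, ← Polynomial.map_map]
      exact (IntermediateField.isSplittingField_iff.mp hfsplit).1.map _
    have hf'L : Polynomial.Splits ((f.map (algebraMap Q ↥C)).map (algebraMap ↥C L)) := by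
      rw [Polynomial.map_map, ← IsScalarTower.algebraMap_eq]
      exact hfL
    have hroots : (f.map (algebraMap Q ↥C)).rootSet L = f.rootSet L := by
      ext x
      simp [Polynomial.mem_rootSet,
        Polynomial.map_ne_zero_iff (algebraMap Q ↥C).injective,
        Polynomial.aeval_map_algebraMap]
    set T' := IntermediateField.extendScalars hCT with hT'def
    have hT' : T' = IntermediateField.adjoin ↥C ((f.map (algebraMap Q ↥C)).rootSet L) := by
      apply IntermediateField.restrictScalars_injective Q
      rw [hT'def, IntermediateField.extendScalars_restrictScalars,
        IntermediateField.restrictScalars_adjoin_eq_sup, hroots, ← hSad, hTdef, sup_comm]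
    haveI sp : (f.map (algebraMap Q ↥C)).IsSplittingField ↥C ↥T' := by
      rw [hT']
      exact IntermediateField.adjoin_rootSet_isSplittingField hf'L
    haveI hgal' : IsGalois ↥C ↥T' :=
      IsGalois.of_separable_splitting_field (hfsep.map (f := algebraMap Q ↥C))
    haveI hfd' : FiniteDimensional ↥C ↥T' :=
      Polynomial.IsSplittingField.finiteDimensional ↥T' (f.map (algebraMap Q ↥C))
    have hchainC : PChain ↥C L m ⊥ (IntermediateField.extendScalars hCB) := by
      have h := pchain_extendScalars m C B le_rfl hCB hchain
      rwa [IntermediateField.extendScalars_self] at h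
    have hT'B : T' ≤ IntermediateField.extendScalars hCB := hTB
    obtain ⟨k, hk⟩ := IH m (by omega) ↥C L hqr (IntermediateField.extendScalars hCB) T'
      hchainC hT'B hgal' hfd'
    have harith : Module.finrank Q ↥S * IntermediateField.relfinrank S T
        = Module.finrank Q ↥C * 2 ^ k := by
      have e1 := IntermediateField.finrank_bot_mul_relfinrank hST
      have e2 := IntermediateField.finrank_bot_mul_relfinrank hCT
      have e3 : IntermediateField.relfinrank C T = 2 ^ k := by
        rw [IntermediateField.relfinrank_eq_finrank_of_le hCT]
        exact hk
      rw [e1, ← e2, e3]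
    by_cases hp2 : p = 2
    · -- p = 2 : divisibility argument
      have hCd : Module.finrank Q ↥C ∣ 2 := by
        have hne : (Polynomial.X ^ p - Polynomial.C a0 : Polynomial Q) ≠ 0 :=
          (Polynomial.monic_X_pow_sub_C a0 hp.ne_zero).ne_zero
        have hdvd := minpoly.dvd Q α (p := Polynomial.X ^ p - Polynomial.C a0)
          (by simp [map_sub, map_pow, ha0])
        have hdeg : (minpoly Q α).natDegree ≤ 2 := by
          have h := Polynomial.natDegree_le_of_dvd hdvd hne
          rwa [Polynomial.natDegree_X_pow_sub_C, hp2] at h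
        have hpos : 0 < (minpoly Q α).natDegree := minpoly.natDegree_pos hint
        have hCr : Module.finrank Q ↥C = (minpoly Q α).natDegree :=
          hC' ▸ IntermediateField.adjoin.finrank hint
        have h12 : Module.finrank Q ↥C = 1 ∨ Module.finrank Q ↥C = 2 := by omega
        rcases h12 with h | h <;> simp [h]
      have hdvd2 : Module.finrank Q ↥S ∣ 2 ^ (k + 1) := by
        have h1 : Module.finrank Q ↥S ∣ Module.finrank Q ↥C * 2 ^ k :=
          ⟨IntermediateField.relfinrank S T, harith.symm⟩
        have h2 : Module.finrank Q ↥C * 2 ^ k ∣ 2 * 2 ^ k := mul_dvd_mul_right hCd _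
        rw [← pow_succ'] at h2
        exact h1.trans h2
      obtain ⟨j, _, hje⟩ := (Nat.dvd_prime_pow Nat.prime_two).mp hdvd2
      exact ⟨j, hje⟩
    · -- p odd
      by_cases hαS : α ∈ S
      · have hCS : C ≤ S := by
          rw [hC']
          exact IntermediateField.adjoin_le_iff.mpr (Set.singleton_subset_iff.mpr hαS)
        have hTS : T = S := sup_eq_left.mpr hCS
        have hαbot : α ∈ (⊥ : IntermediateField Q L) :=
          mem_bot_of_pow_mem_galois hqr hgal hfin hαS hp hp2 ha0
        have hCbot : C = ⊥ := by
          rw [hC']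
          exact IntermediateField.adjoin_simple_eq_bot_iff.mpr hαbot
        refine ⟨k, ?_⟩
        have h := harith
        rw [hTS, IntermediateField.relfinrank_self, mul_one, hCbot,
          IntermediateField.finrank_bot, one_mul] at h
        exact h
      · have hαbot : α ∉ (⊥ : IntermediateField Q L) := fun h => hαS ((bot_le : ⊥ ≤ S) h)
        have hαne : α ≠ 0 := fun h => hαbot (h ▸ zero_mem ⊥)
        have hirrQ := irr_aux hqr hp ha0 hαbot
        have hminQ : minpoly Q α = Polynomial.X ^ p - Polynomial.C a0 :=
          (minpoly.eq_of_irreducible_of_monic hirrQ (by simp [map_sub, map_pow, ha0])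
            (Polynomial.monic_X_pow_sub_C a0 hp.ne_zero)).symm
        have hCrank : Module.finrank Q ↥C = p := by
          rw [hC', IntermediateField.adjoin.finrank hint, hminQ,
            Polynomial.natDegree_X_pow_sub_C]
        -- minpoly of α over S
        have haS : algebraMap ↥S L (algebraMap Q ↥S a0) = α ^ p := by
          rw [← IsScalarTower.algebraMap_apply, ha0]
        have hirrS : Irreducible (Polynomial.X ^ p - Polynomial.C (algebraMap Q ↥S a0)) := by
          apply X_pow_sub_C_irreducible_of_prime hp
          intro b hb
          have hbL : ((b : L)) ^ p = α ^ p := by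
            have h := congrArg (algebraMap ↥S L) hb
            rw [map_pow] at h
            rw [show ((b : L)) = algebraMap ↥S L b from rfl, h, haS]
          have hbne : (b : L) ≠ 0 := by
            intro h0
            rw [h0, zero_pow hp.ne_zero] at hbL
            exact hαne (pow_eq_zero_iff hp.ne_zero |>.mp hbL.symm)
          rcases hru_aux hqr hp α (b : L) hbL.symm hbne with h | h
          · exact hαS (h ▸ b.2)
          · refine hαS ?_
            rw [h]
            exact neg_mem b.2
        have hintS : IsIntegral ↥S α :=
          ⟨Polynomial.X ^ p - Polynomial.C (algebraMap Q ↥S a0),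
            Polynomial.monic_X_pow_sub_C _ hp.ne_zero, by
              rw [← Polynomial.aeval_def]; simp [map_sub, map_pow, haS]⟩
        have hminS : minpoly ↥S α = Polynomial.X ^ p - Polynomial.C (algebraMap Q ↥S a0) :=
          (minpoly.eq_of_irreducible_of_monic hirrS (by simp [map_sub, map_pow, haS])
            (Polynomial.monic_X_pow_sub_C _ hp.ne_zero)).symm
        have hrelST : IntermediateField.relfinrank S T = p := by
          rw [IntermediateField.relfinrank_eq_finrank_of_le hST]
          have hext : IntermediateField.extendScalars hST = IntermediateField.adjoin ↥S {α} := by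
            apply IntermediateField.restrictScalars_injective Q
            rw [IntermediateField.extendScalars_restrictScalars,
              IntermediateField.restrictScalars_adjoin_eq_sup, hTdef, hC']
          rw [hext, IntermediateField.adjoin.finrank hintS, hminS,
            Polynomial.natDegree_X_pow_sub_C]
        refine ⟨k, ?_⟩
        have h := harith
        rw [hrelST, hCrank] at h
        exact Nat.eq_of_mul_eq_mul_left hp.pos (by rw [mul_comm p, h, mul_comm])

lemma dir1_vv : ∀ n : ℕ, Stmt1.{v, v} n := by
  intro n
  induction n using Nat.strong_induction_on with
  | _ n IH => exact dir1_step.{v, v} n IH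

lemma dir1 : ∀ n : ℕ, Stmt1.{u, v} n := fun n => dir1_step.{u, v} n (fun m _ => dir1_vv.{v} m)

end Dir1


/-- Let `Q ⊆ S ⊆ L` with `L` quasireal and `S` finite Galois over `Q`. If `L` is a
repeated radical extension of `Q` then `[S : Q]` is a power of `2`; conversely if
`[S : Q]` is a power of `2` then `S` is a repeated radical extension of `Q`. -/
theorem stmt12 (Q L : Type*) [Field Q] [Field L] [Algebra Q L]
    (hLqr : IsQuasireal L) (S : IntermediateField Q L)
    (hSgal : IsGalois Q S) (hSfin : FiniteDimensional Q S) :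
    (IsRepeatedRadical Q L ⊥ ⊤ → ∃ k : ℕ, Module.finrank Q S = 2 ^ k) ∧
      ((∃ k : ℕ, Module.finrank Q S = 2 ^ k) → IsRepeatedRadical Q L ⊥ S) := by
  constructor
  · intro hrr
    obtain ⟨n, hch⟩ := exists_pchain hrr
    exact dir1 n Q L hLqr ⊤ S hch le_top hSgal hSfin
  · rintro ⟨k, hk⟩
    haveI : CharZero L := hLqr.1
    haveI charS : CharZero ↥S := by
      refine ⟨fun a b hab => ?_⟩
      have h : (a : L) = (b : L) := by
        have := congrArg (algebraMap ↥S L) hab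
        rwa [map_natCast, map_natCast] at this
      exact Nat.cast_injective h
    have chainS : Relation.ReflTransGen (RadicalStep Q ↥S) ⊥ ⊤ :=
      dir2 k Q ↥S charS hSgal hSfin hk
    have mapped := repeatedRadical_map S.val chainS
    have h1 : IntermediateField.map S.val ⊥ = ⊥ := IntermediateField.lift_bot (K := S)
    have h2 : IntermediateField.map S.val ⊤ = S := IntermediateField.lift_top (K := S)
    rw [h1, h2] at mapped
    exact mapped
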